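/- Suppose pointwise uniqueness holds for S ⊆ P_ν(S1×S2): then S contains at most one measure (joint uniqueness in law). Precisely, if μ1, μ2 ∈ S, then choosing Y ~ ν and independent uniforms ξ1, ξ2 with (G1(Y,ξ1),Y) ~ μ1 and (G2(Y,ξ2),Y) ~ μ2, pointwise uniqueness forces G1(Y,ξ1) = G2(Y,ξ2) a.s., hence μ1 = μ2. -/

import Mathlib

open MeasureTheory ProbabilityTheory

lemma aux_fst {α β γ : Type*} [MeasurableSpace α] [MeasurableSpace β] [MeasurableSpace γ]
    (μ : Measure α) [SFinite μ] (κ : Kernel α (β × γ)) [IsSFiniteKernel κ] :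
    (μ ⊗ₘ κ).map (fun p => (p.1, p.2.1)) = μ ⊗ₘ κ.fst := by
  ext s hs
  rw [Measure.map_apply (by fun_prop) hs, Measure.compProd_apply (hs.preimage (by fun_prop)),
    Measure.compProd_apply hs]
  refine lintegral_congr fun a => ?_
  rw [Kernel.fst_apply']
  · rfl
  · exact hs.preimage (by fun_prop)

lemma aux_snd {α β γ : Type*} [MeasurableSpace α] [MeasurableSpace β] [MeasurableSpace γ]
    (μ : Measure α) [SFinite μ] (κ : Kernel α (β × γ)) [IsSFiniteKernel κ] :
    (μ ⊗ₘ κ).map (fun p => (p.1, p.2.2)) = μ ⊗ₘ κ.snd := by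
  ext s hs
  rw [Measure.map_apply (by fun_prop) hs, Measure.compProd_apply (hs.preimage (by fun_prop)),
    Measure.compProd_apply hs]
  refine lintegral_congr fun a => ?_
  rw [Kernel.snd_apply']
  · rfl
  · exact hs.preimage (by fun_prop)

/-- Part of the proof of Theorem 1.5 of Kurtz: pointwise uniqueness implies joint
uniqueness in law, i.e. the set of joint solution measures contains at most one
measure. -/
theorem stmt16
    {S1 S2 : Type} [MeasurableSpace S1] [TopologicalSpace S1] [PolishSpace S1] [BorelSpace S1]
    [MeasurableSpace S2] [TopologicalSpace S2] [PolishSpace S2] [BorelSpace S2]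
    (ν : Measure S2) [IsProbabilityMeasure ν]
    (S : Set (Measure (S1 × S2)))
    (hS : ∀ μ ∈ S, IsProbabilityMeasure μ ∧ μ.map Prod.snd = ν)
    (huniq : ∀ (Ω : Type) (mΩ : MeasurableSpace Ω) (P : Measure Ω), IsProbabilityMeasure P →
      ∀ (X1 X2 : Ω → S1) (Y : Ω → S2), Measurable X1 → Measurable X2 → Measurable Y →
        P.map (fun ω => (X1 ω, Y ω)) ∈ S → P.map (fun ω => (X2 ω, Y ω)) ∈ S →
        X1 =ᵐ[P] X2) :
    S.Subsingleton := by
  intro μ1 hμ1 μ2 hμ2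
  obtain ⟨hP1, hν1⟩ := hS μ1 hμ1
  obtain ⟨hP2, hν2⟩ := hS μ2 hμ2
  -- S1 is nonempty since μ1 is a probability measure on S1 × S2
  have hne : Nonempty S1 := by
    rcases isEmpty_or_nonempty S1 with h | h
    · exfalso
      have : μ1 Set.univ = 1 := hP1.measure_univ
      rw [Set.univ_eq_empty_iff.mpr (by infer_instance)] at this
      simp at this
    · exact h
  -- swapped measures on S2 × S1
  set ρ1 : Measure (S2 × S1) := μ1.map Prod.swap with hρ1
  set ρ2 : Measure (S2 × S1) := μ2.map Prod.swap with hρ2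
  have hρ1P : IsProbabilityMeasure ρ1 := Measure.isProbabilityMeasure_map measurable_swap.aemeasurable
  have hρ2P : IsProbabilityMeasure ρ2 := Measure.isProbabilityMeasure_map measurable_swap.aemeasurable
  have hfst1 : ρ1.fst = ν := by
    rw [hρ1, Measure.fst_map_swap, Measure.snd, hν1]
  have hfst2 : ρ2.fst = ν := by
    rw [hρ2, Measure.fst_map_swap, Measure.snd, hν2]
  set κ1 := ρ1.condKernel with hκ1
  set κ2 := ρ2.condKernel with hκ2
  have hd1 : ν ⊗ₘ κ1 = ρ1 := by rw [← hfst1]; exact ρ1.disintegrate ρ1.condKernel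
  have hd2 : ν ⊗ₘ κ2 = ρ2 := by rw [← hfst2]; exact ρ2.disintegrate ρ2.condKernel
  -- the coupling measure
  set P : Measure (S2 × S1 × S1) := ν ⊗ₘ (κ1 ×ₖ κ2) with hPdef
  have hPprob : IsProbabilityMeasure P := by infer_instance
  have hswap1 : ρ1.map Prod.swap = μ1 := by
    rw [hρ1, Measure.map_map measurable_swap measurable_swap]
    simp
  have hswap2 : ρ2.map Prod.swap = μ2 := by
    rw [hρ2, Measure.map_map measurable_swap measurable_swap]
    simp
  have hmap1 : P.map (fun ω => (ω.2.1, ω.1)) = μ1 := by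
    have h1 : P.map (fun ω => (ω.1, ω.2.1)) = ρ1 := by
      rw [hPdef, aux_fst, Kernel.fst_prod, hd1]
    have : P.map (fun ω => (ω.2.1, ω.1))
        = (P.map (fun ω : S2 × S1 × S1 => (ω.1, ω.2.1))).map Prod.swap := by
      rw [Measure.map_map measurable_swap (by fun_prop)]
      rfl
    rw [this, h1, hswap1]
  have hmap2 : P.map (fun ω => (ω.2.2, ω.1)) = μ2 := by
    have h2 : P.map (fun ω => (ω.1, ω.2.2)) = ρ2 := by
      rw [hPdef, aux_snd, Kernel.snd_prod, hd2]
    have : P.map (fun ω => (ω.2.2, ω.1))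
        = (P.map (fun ω : S2 × S1 × S1 => (ω.1, ω.2.2))).map Prod.swap := by
      rw [Measure.map_map measurable_swap (by fun_prop)]
      rfl
    rw [this, h2, hswap2]
  have hae := huniq (S2 × S1 × S1) inferInstance P hPprob
    (fun ω => ω.2.1) (fun ω => ω.2.2) Prod.fst (by fun_prop) (by fun_prop) (by fun_prop)
    (by rw [hmap1]; exact hμ1) (by rw [hmap2]; exact hμ2)
  have : (fun ω : S2 × S1 × S1 => (ω.2.1, ω.1)) =ᵐ[P] (fun ω => (ω.2.2, ω.1)) := by
    filter_upwards [hae] with ω hω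
    simp [hω]
  calc μ1 = P.map (fun ω => (ω.2.1, ω.1)) := hmap1.symm
    _ = P.map (fun ω => (ω.2.2, ω.1)) := Measure.map_congr this
    _ = μ2 := hmap2
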